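/- Let D ⊆ ℝᵈ be a closed convex set containing a point e in its interior, and let η(0) ∈ D. Suppose H ∈ ℝᵈ satisfies the Nagumo condition lim_{h→0+} h⁻¹ dist(η(0) + hH, D) = 0. Define H_ε := H − ε(η(0) − e) for ε > 0. Then for every ε > 0 there exists α > 0 such that for all 0 < h ≤ α and all u ∈ ℝᵈ with |u| ≤ α, we have η(0) + hH_ε + hu ∈ D. -/

import Mathlib

open Set Metric Filter

/-- Remark 3.2: for a closed convex set `D` with interior point `e`, the Nagumo
condition for `H` at `η(0) ∈ D` yields the uniform interior condition for the
perturbed drift `H_ε = H - ε(η(0) - e)`. -/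
theorem stmt_3 (d : ℕ) (D : Set (EuclideanSpace ℝ (Fin d)))
    (hclosed : IsClosed D) (hconv : Convex ℝ D)
    (e : EuclideanSpace ℝ (Fin d)) (he : e ∈ interior D)
    (η0 : EuclideanSpace ℝ (Fin d)) (hη0 : η0 ∈ D)
    (H : EuclideanSpace ℝ (Fin d))
    (hNagumo : Tendsto (fun h : ℝ => h⁻¹ * infDist (η0 + h • H) D)
      (nhdsWithin 0 (Ioi 0)) (nhds 0)) :
    ∀ ε : ℝ, 0 < ε → ∃ α : ℝ, 0 < α ∧ ∀ h : ℝ, 0 < h → h ≤ α →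
      ∀ u : EuclideanSpace ℝ (Fin d), ‖u‖ ≤ α →
        η0 + h • (H - ε • (η0 - e)) + h • u ∈ D := by
  intro ε hε
  -- ball around e inside D
  obtain ⟨r, hr, hball⟩ : ∃ r > 0, closedBall e r ⊆ D := by
    rcases Metric.isOpen_iff.1 isOpen_interior e he with ⟨r, hr, hsub⟩
    exact ⟨r / 2, by linarith, fun x hx =>
      interior_subset (hsub (lt_of_le_of_lt (mem_closedBall.1 hx) (by linarith)))⟩
  -- Nagumo: eventually h⁻¹ * infDist ≤ ε r / 4
  have hev : ∀ᶠ h in nhdsWithin (0:ℝ) (Ioi 0),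
      h⁻¹ * infDist (η0 + h • H) D < ε * r / 4 := by
    have := hNagumo (Iio_mem_nhds (show (0:ℝ) < ε * r / 4 by positivity))
    exact this
  rcases Metric.mem_nhdsWithin_iff.1 hev with ⟨δ, hδ, hδ'⟩
  set α : ℝ := min (min (δ / 2) (1 / (2 * ε)))
    (min (ε * r / 4) (r / (2 * (ε * r / 4 + ‖H‖ + 1)))) with hα
  have hαpos : 0 < α := by
    refine lt_min (lt_min (by linarith) (by positivity)) (lt_min (by positivity) (by positivity))
  refine ⟨α, hαpos, fun h hh hhα u hu => ?_⟩
  set x := η0 + h • H with hx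
  have hne : D.Nonempty := ⟨η0, hη0⟩
  obtain ⟨y, hy, hyd⟩ := hclosed.exists_infDist_eq_dist hne x
  have hDnonneg : 0 ≤ infDist x D := infDist_nonneg
  have hhδ : h < δ := lt_of_le_of_lt hhα (lt_of_le_of_lt
    (le_trans (min_le_left _ _) (min_le_left _ _)) (by linarith))
  have hinf : infDist x D < ε * r / 4 * h := by
    have h1 : h⁻¹ * infDist x D < ε * r / 4 := by
      have := hδ' ⟨by simpa [Real.dist_eq, abs_of_pos hh] using hhδ, mem_Ioi.2 hh⟩
      simpa using this
    calc infDist x D = h * (h⁻¹ * infDist x D) := by field_simp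
    _ < h * (ε * r / 4) := by exact (mul_lt_mul_iff_right₀ hh).2 h1
    _ = ε * r / 4 * h := by ring
  have hxy : dist x y < ε * r / 4 * h := hyd ▸ hinf
  have hεα : α ≤ 1 / (2 * ε) := le_trans (min_le_left _ _) (min_le_right _ _)
  have hα4 : α ≤ ε * r / 4 := le_trans (min_le_right _ _) (min_le_left _ _)
  have hαH : α ≤ r / (2 * (ε * r / 4 + ‖H‖ + 1)) :=
    le_trans (min_le_right _ _) (min_le_right _ _)
  have ht0 : 0 < h * ε := by positivity
  have ht1 : h * ε ≤ 1 / 2 := by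
    have : h ≤ 1 / (2 * ε) := le_trans hhα hεα
    calc h * ε ≤ (1 / (2 * ε)) * ε := by nlinarith
    _ = 1 / 2 := by field_simp
  set v : EuclideanSpace ℝ (Fin d) := (y - η0) + (h * ε)⁻¹ • ((x - y) + h • u) with hv
  have hvnorm : ‖v‖ ≤ r := by
    have h1 : ‖y - η0‖ ≤ ε * r / 4 * h + h * ‖H‖ := by
      have : ‖y - η0‖ ≤ ‖y - x‖ + ‖x - η0‖ := by
        have := norm_sub_le_norm_sub_add_norm_sub y x η0
        linarith
      have h2 : ‖y - x‖ = dist x y := by rw [dist_comm, dist_eq_norm]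
      have h3 : ‖x - η0‖ = h * ‖H‖ := by
        simp [hx, norm_smul, abs_of_pos hh]
      nlinarith [hxy]
    have h2 : ‖(h * ε)⁻¹ • ((x - y) + h • u)‖ ≤ r / 4 + α / ε := by
      rw [norm_smul]
      have hb : ‖(x - y) + h • u‖ ≤ ε * r / 4 * h + h * α := by
        calc ‖(x - y) + h • u‖ ≤ ‖x - y‖ + ‖h • u‖ := norm_add_le _ _
        _ ≤ ε * r / 4 * h + h * α := by
            rw [norm_smul]
            have : ‖x - y‖ = dist x y := (dist_eq_norm x y).symm
            rw [this, Real.norm_eq_abs, abs_of_pos hh]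
            nlinarith [hxy, norm_nonneg u]
      have : ‖(h * ε)⁻¹‖ = (h * ε)⁻¹ := by
        rw [Real.norm_eq_abs, abs_of_pos (by positivity)]
      rw [this]
      calc (h * ε)⁻¹ * ‖(x - y) + h • u‖ ≤ (h * ε)⁻¹ * (ε * r / 4 * h + h * α) := by
            exact mul_le_mul_of_nonneg_left hb (by positivity)
      _ = r / 4 + α / ε := by field_simp
    have h3 : ‖v‖ ≤ ‖y - η0‖ + ‖(h * ε)⁻¹ • ((x - y) + h • u)‖ := norm_add_le _ _
    have hαε : α / ε ≤ r / 4 := by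
      rw [div_le_iff₀ hε]; linarith
    have hhr : ε * r / 4 * h + h * ‖H‖ ≤ r / 2 := by
      have hpos : (0:ℝ) < ε * r / 4 + ‖H‖ + 1 := by positivity
      have : h ≤ r / (2 * (ε * r / 4 + ‖H‖ + 1)) := le_trans hhα hαH
      rw [le_div_iff₀ (by positivity)] at this
      have expand : h * (2 * (ε * r / 4 + ‖H‖ + 1))
          = 2 * (ε * r / 4 * h + h * ‖H‖) + 2 * h := by ring
      linarith
    linarith
  have hev : e + v ∈ D := hball (by
    simpa [mem_closedBall, dist_eq_norm] using hvnorm)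
  have hcomb := hconv hy hev (by linarith : (0:ℝ) ≤ 1 - h * ε) ht0.le (by ring)
  have hkey : (1 - h * ε) • y + (h * ε) • (e + v)
      = η0 + h • (H - ε • (η0 - e)) + h • u := by
    rw [hv, hx]
    have hne' : h * ε ≠ 0 := ht0.ne'
    match_scalars <;> field_simp <;> ring
  rwa [hkey] at hcomb
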